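/- Let V : ℝ³ → ℝ be C¹ and suppose μ₁² ≠ μ₂². If q ∈ ℝ⁴ with A = (q₁q₄ − q₂q₃)/2 ≠ 0 is such that (q, 0) is a critical point of the fully reduced Hamiltonian H (all partial derivatives of H vanish at momenta p = 0), then the solvability condition ν₁q₁q₂ + ν₂q₃q₄ = 0 holds; moreover, writing V₁, V₂, V₃ for the partial derivatives of V evaluated at (q₁²+q₂², q₃²+q₄², q₁q₃+q₂q₄), and I₁ = ν₂q₄² + ν₁q₂², I₂ = ν₁q₁² + ν₂q₃², the equilibrium conditions read: I₁μ₂²q₄/(8A³ν₁ν₂) = 2q₁V₁ + q₃V₃, −I₂μ₁²q₃/(8A³ν₁ν₂) = 2q₂V₁ + q₄V₃, −I₁μ₂²q₂/(8A³ν₁ν₂) = 2q₃V₂ + q₁V₃, and I₂μ₁²q₁/(8A³ν₁ν₂) = 2q₄V₂ + q₂V₃. -/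

import Mathlib

noncomputable section

/-- `f(q_i, q_j, L₃) = ((L_d + L_s)²q_i² + (L_d − L_s)²q_j²)/(16A²)`,
with `L_d = √(Δ² − L₃²)`, `L_s = √(Σ² − L₃²)`, `Δ = μ₁ − μ₂`, `Σ = μ₁ + μ₂`. -/
def fred (μ₁ μ₂ A qi qj L₃ : ℝ) : ℝ :=
  let Ld := Real.sqrt ((μ₁ - μ₂) ^ 2 - L₃ ^ 2)
  let Ls := Real.sqrt ((μ₁ + μ₂) ^ 2 - L₃ ^ 2)
  ((Ld + Ls) ^ 2 * qi ^ 2 + (Ld - Ls) ^ 2 * qj ^ 2) / (16 * A ^ 2)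

/-- The fully reduced Hamiltonian of the three-body problem in `ℝ⁴` on the phase space
`ℝ⁴ × ℝ⁴` (positions `q`, momenta `p`). -/
def Hred (ν₁ ν₂ μ₁ μ₂ : ℝ) (V : (Fin 3 → ℝ) → ℝ) (z : (Fin 4 → ℝ) × (Fin 4 → ℝ)) : ℝ :=
  let q := z.1; let p := z.2
  let A := (q 0 * q 3 - q 1 * q 2) / 2
  let L₃ := q 0 * p 1 - q 1 * p 0 + q 2 * p 3 - q 3 * p 2
  (1 / (2 * ν₁)) * (p 0 ^ 2 + p 1 ^ 2 + fred μ₁ μ₂ A (q 2) (q 3) L₃) +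
    (1 / (2 * ν₂)) * (p 2 ^ 2 + p 3 ^ 2 + fred μ₁ μ₂ A (q 0) (q 1) L₃) +
    V ![q 0 ^ 2 + q 1 ^ 2, q 2 ^ 2 + q 3 ^ 2, q 0 * q 2 + q 1 * q 3]

lemma fred_zero (μ₁ μ₂ : ℝ) (hμ : μ₁ > μ₂) (hμ₂ : 0 ≤ μ₂) (A qi qj : ℝ) :
    fred μ₁ μ₂ A qi qj 0 = (μ₁ ^ 2 * qi ^ 2 + μ₂ ^ 2 * qj ^ 2) / (4 * A ^ 2) := by
  simp only [fred]
  rw [show (μ₁ - μ₂) ^ 2 - 0 ^ 2 = (μ₁ - μ₂) ^ 2 by ring,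
      show (μ₁ + μ₂) ^ 2 - 0 ^ 2 = (μ₁ + μ₂) ^ 2 by ring,
      Real.sqrt_sq (by linarith), Real.sqrt_sq (by linarith)]
  rcases eq_or_ne A 0 with h | h
  · simp [h]
  · field_simp
    ring

lemma Hred_zero (ν₁ ν₂ μ₁ μ₂ : ℝ) (hμ : μ₁ > μ₂) (hμ₂ : 0 ≤ μ₂) (V : (Fin 3 → ℝ) → ℝ)
    (q' : Fin 4 → ℝ) :
    Hred ν₁ ν₂ μ₁ μ₂ V (q', 0) =
      (μ₁ ^ 2 * q' 2 ^ 2 + μ₂ ^ 2 * q' 3 ^ 2) / (2 * ν₁ * (q' 0 * q' 3 - q' 1 * q' 2) ^ 2) +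
      (μ₁ ^ 2 * q' 0 ^ 2 + μ₂ ^ 2 * q' 1 ^ 2) / (2 * ν₂ * (q' 0 * q' 3 - q' 1 * q' 2) ^ 2) +
      V ![q' 0 ^ 2 + q' 1 ^ 2, q' 2 ^ 2 + q' 3 ^ 2, q' 0 * q' 2 + q' 1 * q' 3] := by
  simp only [Hred, Pi.zero_apply, mul_zero, zero_mul, add_zero, sub_zero, zero_add,
    ne_eq, OfNat.ofNat_ne_zero, not_false_eq_true, zero_pow]
  rw [fred_zero μ₁ μ₂ hμ hμ₂, fred_zero μ₁ μ₂ hμ hμ₂]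
  congr 1
  rw [show (4 * ((q' 0 * q' 3 - q' 1 * q' 2) / 2) ^ 2) = (q' 0 * q' 3 - q' 1 * q' 2) ^ 2 by ring]
  rw [div_mul_eq_mul_div, one_mul, div_div, div_mul_eq_mul_div, one_mul, div_div]
  ring_nf

lemma Hred_diff (ν₁ ν₂ μ₁ μ₂ : ℝ) (hμ : μ₁ > μ₂) (hμ₂ : 0 ≤ μ₂)
    (V : (Fin 3 → ℝ) → ℝ) (hV : ContDiff ℝ 1 V) (q : Fin 4 → ℝ)
    (hD : q 0 * q 3 - q 1 * q 2 ≠ 0) :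
    DifferentiableAt ℝ (Hred ν₁ ν₂ μ₁ μ₂ V) (q, (0 : Fin 4 → ℝ)) := by
  have hsq1 : DifferentiableAt ℝ (fun z : (Fin 4 → ℝ) × (Fin 4 → ℝ) => Real.sqrt ((μ₁ - μ₂) ^ 2 - (z.1 0 * z.2 1 - z.1 1 * z.2 0 + z.1 2 * z.2 3 - z.1 3 * z.2 2) ^ 2)) (q, 0) := by
    refine DifferentiableAt.sqrt (by fun_prop) ?_
    simp
    nlinarith [sq_nonneg (μ₁ - μ₂)]
  have hsq2 : DifferentiableAt ℝ (fun z : (Fin 4 → ℝ) × (Fin 4 → ℝ) => Real.sqrt ((μ₁ + μ₂) ^ 2 - (z.1 0 * z.2 1 - z.1 1 * z.2 0 + z.1 2 * z.2 3 - z.1 3 * z.2 2) ^ 2)) (q, 0) := by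
    refine DifferentiableAt.sqrt (by fun_prop) ?_
    simp
    nlinarith [sq_nonneg (μ₁ + μ₂)]
  have hne : (fun z : (Fin 4 → ℝ) × (Fin 4 → ℝ) => 16 * ((z.1 0 * z.1 3 - z.1 1 * z.1 2) / 2) ^ 2) (q, (0 : Fin 4 → ℝ)) ≠ 0 := by
    simp only
    intro h
    apply hD
    nlinarith [sq_nonneg ((q 0 * q 3 - q 1 * q 2) / 2)]
  have hden : DifferentiableAt ℝ (fun z : (Fin 4 → ℝ) × (Fin 4 → ℝ) => 16 * ((z.1 0 * z.1 3 - z.1 1 * z.1 2) / 2) ^ 2) (q, 0) := by fun_prop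
  have hq23 : DifferentiableAt ℝ (fun z : (Fin 4 → ℝ) × (Fin 4 → ℝ) => z.1 2 ^ 2) (q, 0) := by fun_prop
  have hq33 : DifferentiableAt ℝ (fun z : (Fin 4 → ℝ) × (Fin 4 → ℝ) => z.1 3 ^ 2) (q, 0) := by fun_prop
  have hq03 : DifferentiableAt ℝ (fun z : (Fin 4 → ℝ) × (Fin 4 → ℝ) => z.1 0 ^ 2) (q, 0) := by fun_prop
  have hq13 : DifferentiableAt ℝ (fun z : (Fin 4 → ℝ) × (Fin 4 → ℝ) => z.1 1 ^ 2) (q, 0) := by fun_prop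
  have hnum1 : DifferentiableAt ℝ (fun z : (Fin 4 → ℝ) × (Fin 4 → ℝ) => ((Real.sqrt ((μ₁ - μ₂) ^ 2 - (z.1 0 * z.2 1 - z.1 1 * z.2 0 + z.1 2 * z.2 3 - z.1 3 * z.2 2) ^ 2) + Real.sqrt ((μ₁ + μ₂) ^ 2 - (z.1 0 * z.2 1 - z.1 1 * z.2 0 + z.1 2 * z.2 3 - z.1 3 * z.2 2) ^ 2)) ^ 2 * z.1 2 ^ 2 + (Real.sqrt ((μ₁ - μ₂) ^ 2 - (z.1 0 * z.2 1 - z.1 1 * z.2 0 + z.1 2 * z.2 3 - z.1 3 * z.2 2) ^ 2) - Real.sqrt ((μ₁ + μ₂) ^ 2 - (z.1 0 * z.2 1 - z.1 1 * z.2 0 + z.1 2 * z.2 3 - z.1 3 * z.2 2) ^ 2)) ^ 2 * z.1 3 ^ 2)) (q, 0) :=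
    (((hsq1.add hsq2).pow 2).mul hq23).add (((hsq1.sub hsq2).pow 2).mul hq33)
  have hnum2 : DifferentiableAt ℝ (fun z : (Fin 4 → ℝ) × (Fin 4 → ℝ) => ((Real.sqrt ((μ₁ - μ₂) ^ 2 - (z.1 0 * z.2 1 - z.1 1 * z.2 0 + z.1 2 * z.2 3 - z.1 3 * z.2 2) ^ 2) + Real.sqrt ((μ₁ + μ₂) ^ 2 - (z.1 0 * z.2 1 - z.1 1 * z.2 0 + z.1 2 * z.2 3 - z.1 3 * z.2 2) ^ 2)) ^ 2 * z.1 0 ^ 2 + (Real.sqrt ((μ₁ - μ₂) ^ 2 - (z.1 0 * z.2 1 - z.1 1 * z.2 0 + z.1 2 * z.2 3 - z.1 3 * z.2 2) ^ 2) - Real.sqrt ((μ₁ + μ₂) ^ 2 - (z.1 0 * z.2 1 - z.1 1 * z.2 0 + z.1 2 * z.2 3 - z.1 3 * z.2 2) ^ 2)) ^ 2 * z.1 1 ^ 2)) (q, 0) :=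
    (((hsq1.add hsq2).pow 2).mul hq03).add (((hsq1.sub hsq2).pow 2).mul hq13)
  have hfred1 := hnum1.mul (hden.inv hne)

  have hfred2 := hnum2.mul (hden.inv hne)

  have hp1 : DifferentiableAt ℝ (fun z : (Fin 4 → ℝ) × (Fin 4 → ℝ) => z.2 0 ^ 2 + z.2 1 ^ 2) (q, 0) := by fun_prop
  have hp2 : DifferentiableAt ℝ (fun z : (Fin 4 → ℝ) × (Fin 4 → ℝ) => z.2 2 ^ 2 + z.2 3 ^ 2) (q, 0) := by fun_prop
  have hs : DifferentiableAt ℝ (fun z : (Fin 4 → ℝ) × (Fin 4 → ℝ) =>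
      (![z.1 0 ^ 2 + z.1 1 ^ 2, z.1 2 ^ 2 + z.1 3 ^ 2, z.1 0 * z.1 2 + z.1 1 * z.1 3] :
        Fin 3 → ℝ)) (q, 0) := by
    refine differentiableAt_pi.mpr fun i => ?_
    fin_cases i
    · exact (by fun_prop : DifferentiableAt ℝ (fun z : (Fin 4 → ℝ) × (Fin 4 → ℝ) => z.1 0 ^ 2 + z.1 1 ^ 2) (q, 0))
    · exact (by fun_prop : DifferentiableAt ℝ (fun z : (Fin 4 → ℝ) × (Fin 4 → ℝ) => z.1 2 ^ 2 + z.1 3 ^ 2) (q, 0))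
    · exact (by fun_prop : DifferentiableAt ℝ
        (fun z : (Fin 4 → ℝ) × (Fin 4 → ℝ) => z.1 0 * z.1 2 + z.1 1 * z.1 3) (q, 0))
  have hVt : DifferentiableAt ℝ (fun z : (Fin 4 → ℝ) × (Fin 4 → ℝ) =>
      V ![z.1 0 ^ 2 + z.1 1 ^ 2, z.1 2 ^ 2 + z.1 3 ^ 2, z.1 0 * z.1 2 + z.1 1 * z.1 3]) (q, 0) :=
    DifferentiableAt.comp _ ((hV.differentiable one_ne_zero).differentiableAt) hs
  exact ((DifferentiableAt.const_mul (hp1.add hfred1) _).add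
    (DifferentiableAt.const_mul (hp2.add hfred2) _)).add hVt

set_option maxHeartbeats 2000000 in
lemma key (ν₁ ν₂ μ₁ μ₂ : ℝ) (hν₁ : 0 < ν₁) (hν₂ : 0 < ν₂) (hμ : μ₁ > μ₂) (hμ₂ : 0 ≤ μ₂)
    (V : (Fin 3 → ℝ) → ℝ) (hV : ContDiff ℝ 1 V) (q : Fin 4 → ℝ)
    (hD : q 0 * q 3 - q 1 * q 2 ≠ 0)
    (hcrit : fderiv ℝ (Hred ν₁ ν₂ μ₁ μ₂ V) (q, (0 : Fin 4 → ℝ)) = 0)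
    (v0 v1 v2 v3 : ℝ) :
    ν₂ * (q 0 * q 3 - q 1 * q 2) * (μ₁ ^ 2 * (2 * q 2 * v2) + μ₂ ^ 2 * (2 * q 3 * v3))
      + ν₁ * (q 0 * q 3 - q 1 * q 2) * (μ₁ ^ 2 * (2 * q 0 * v0) + μ₂ ^ 2 * (2 * q 1 * v1))
      - 2 * ν₂ * (μ₁ ^ 2 * q 2 ^ 2 + μ₂ ^ 2 * q 3 ^ 2) *
          (v0 * q 3 + q 0 * v3 - v1 * q 2 - q 1 * v2)
      - 2 * ν₁ * (μ₁ ^ 2 * q 0 ^ 2 + μ₂ ^ 2 * q 1 ^ 2) *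
          (v0 * q 3 + q 0 * v3 - v1 * q 2 - q 1 * v2)
      + 2 * ν₁ * ν₂ * (q 0 * q 3 - q 1 * q 2) ^ 3 * ((2 * q 0 * v0 + 2 * q 1 * v1) *
            fderiv ℝ V ![q 0 ^ 2 + q 1 ^ 2, q 2 ^ 2 + q 3 ^ 2, q 0 * q 2 + q 1 * q 3]
              (Pi.single 0 1)
        + (2 * q 2 * v2 + 2 * q 3 * v3) *
            fderiv ℝ V ![q 0 ^ 2 + q 1 ^ 2, q 2 ^ 2 + q 3 ^ 2, q 0 * q 2 + q 1 * q 3]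
              (Pi.single 1 1)
        + (q 0 * v2 + v0 * q 2 + q 1 * v3 + v1 * q 3) *
            fderiv ℝ V ![q 0 ^ 2 + q 1 ^ 2, q 2 ^ 2 + q 3 ^ 2, q 0 * q 2 + q 1 * q 3]
              (Pi.single 2 1)) = 0 := by
  set v : Fin 4 → ℝ := ![v0, v1, v2, v3] with hv
  have hx0 : HasDerivAt (fun t : ℝ => q 0 + t * v0) v0 0 := (hasDerivAt_mul_const v0).const_add _
  have hx1 : HasDerivAt (fun t : ℝ => q 1 + t * v1) v1 0 := (hasDerivAt_mul_const v1).const_add _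
  have hx2 : HasDerivAt (fun t : ℝ => q 2 + t * v2) v2 0 := (hasDerivAt_mul_const v2).const_add _
  have hx3 : HasDerivAt (fun t : ℝ => q 3 + t * v3) v3 0 := (hasDerivAt_mul_const v3).const_add _
  -- D(t) and its derivative
  have hDf : HasDerivAt (fun t : ℝ =>
      (q 0 + t * v0) * (q 3 + t * v3) - (q 1 + t * v1) * (q 2 + t * v2))
      (v0 * q 3 + q 0 * v3 - (v1 * q 2 + q 1 * v2)) 0 := by
    have := (hx0.mul hx3).sub (hx1.mul hx2)
    norm_num at this
    exact this
  have hD0 : (q 0 + 0 * v0) * (q 3 + 0 * v3) - (q 1 + 0 * v1) * (q 2 + 0 * v2) =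
      q 0 * q 3 - q 1 * q 2 := by ring
  -- numerators
  have hN1 : HasDerivAt (fun t : ℝ =>
      μ₁ ^ 2 * (q 2 + t * v2) ^ 2 + μ₂ ^ 2 * (q 3 + t * v3) ^ 2)
      (μ₁ ^ 2 * (2 * q 2 * v2) + μ₂ ^ 2 * (2 * q 3 * v3)) 0 := by
    have := ((hx2.pow 2).const_mul (μ₁ ^ 2)).add ((hx3.pow 2).const_mul (μ₂ ^ 2))
    refine this.congr_deriv ?_
    push_cast
    ring
  have hN2 : HasDerivAt (fun t : ℝ =>
      μ₁ ^ 2 * (q 0 + t * v0) ^ 2 + μ₂ ^ 2 * (q 1 + t * v1) ^ 2)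
      (μ₁ ^ 2 * (2 * q 0 * v0) + μ₂ ^ 2 * (2 * q 1 * v1)) 0 := by
    have := ((hx0.pow 2).const_mul (μ₁ ^ 2)).add ((hx1.pow 2).const_mul (μ₂ ^ 2))
    refine this.congr_deriv ?_
    push_cast
    ring
  -- denominators
  have hden1 : HasDerivAt (fun t : ℝ => 2 * ν₁ *
      ((q 0 + t * v0) * (q 3 + t * v3) - (q 1 + t * v1) * (q 2 + t * v2)) ^ 2)
      (2 * ν₁ * (2 * (q 0 * q 3 - q 1 * q 2) *
        (v0 * q 3 + q 0 * v3 - (v1 * q 2 + q 1 * v2)))) 0 := by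
    have := (hDf.pow 2).const_mul (2 * ν₁)
    refine this.congr_deriv ?_
    rw [hD0]
    push_cast
    ring
  have hden2 : HasDerivAt (fun t : ℝ => 2 * ν₂ *
      ((q 0 + t * v0) * (q 3 + t * v3) - (q 1 + t * v1) * (q 2 + t * v2)) ^ 2)
      (2 * ν₂ * (2 * (q 0 * q 3 - q 1 * q 2) *
        (v0 * q 3 + q 0 * v3 - (v1 * q 2 + q 1 * v2)))) 0 := by
    have := (hDf.pow 2).const_mul (2 * ν₂)
    refine this.congr_deriv ?_
    rw [hD0]
    push_cast
    ring
  have hden1ne : (fun t : ℝ => 2 * ν₁ *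
      ((q 0 + t * v0) * (q 3 + t * v3) - (q 1 + t * v1) * (q 2 + t * v2)) ^ 2) 0 ≠ 0 := by
    simp only
    rw [hD0]
    exact mul_ne_zero (by positivity) (pow_ne_zero _ hD)
  have hden2ne : (fun t : ℝ => 2 * ν₂ *
      ((q 0 + t * v0) * (q 3 + t * v3) - (q 1 + t * v1) * (q 2 + t * v2)) ^ 2) 0 ≠ 0 := by
    simp only
    rw [hD0]
    exact mul_ne_zero (by positivity) (pow_ne_zero _ hD)
  have hterm1 := hN1.div hden1 hden1ne
  have hterm2 := hN2.div hden2 hden2ne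
  -- the V ∘ σ part
  have hσ : HasDerivAt (fun t : ℝ =>
      (![(q 0 + t * v0) ^ 2 + (q 1 + t * v1) ^ 2,
         (q 2 + t * v2) ^ 2 + (q 3 + t * v3) ^ 2,
         (q 0 + t * v0) * (q 2 + t * v2) + (q 1 + t * v1) * (q 3 + t * v3)] : Fin 3 → ℝ))
      (![2 * q 0 * v0 + 2 * q 1 * v1, 2 * q 2 * v2 + 2 * q 3 * v3,
         q 0 * v2 + v0 * q 2 + q 1 * v3 + v1 * q 3] : Fin 3 → ℝ) 0 := by
    refine hasDerivAt_pi.mpr fun i => ?_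
    fin_cases i
    · show HasDerivAt (fun t : ℝ => (q 0 + t * v0) ^ 2 + (q 1 + t * v1) ^ 2)
        (2 * q 0 * v0 + 2 * q 1 * v1) 0
      have := (hx0.pow 2).add (hx1.pow 2)
      refine this.congr_deriv ?_
      push_cast
      ring
    · show HasDerivAt (fun t : ℝ => (q 2 + t * v2) ^ 2 + (q 3 + t * v3) ^ 2)
        (2 * q 2 * v2 + 2 * q 3 * v3) 0
      have := (hx2.pow 2).add (hx3.pow 2)
      refine this.congr_deriv ?_
      push_cast
      ring
    · show HasDerivAt (fun t : ℝ =>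
        (q 0 + t * v0) * (q 2 + t * v2) + (q 1 + t * v1) * (q 3 + t * v3))
        (q 0 * v2 + v0 * q 2 + q 1 * v3 + v1 * q 3) 0
      have := (hx0.mul hx2).add (hx1.mul hx3)
      refine this.congr_deriv ?_
      ring
  have hVd : HasFDerivAt V (fderiv ℝ V
      ![q 0 ^ 2 + q 1 ^ 2, q 2 ^ 2 + q 3 ^ 2, q 0 * q 2 + q 1 * q 3])
      ((fun t : ℝ =>
      (![(q 0 + t * v0) ^ 2 + (q 1 + t * v1) ^ 2,
         (q 2 + t * v2) ^ 2 + (q 3 + t * v3) ^ 2,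
         (q 0 + t * v0) * (q 2 + t * v2) + (q 1 + t * v1) * (q 3 + t * v3)] : Fin 3 → ℝ)) 0) := by
    have h1 : ((fun t : ℝ =>
      (![(q 0 + t * v0) ^ 2 + (q 1 + t * v1) ^ 2,
         (q 2 + t * v2) ^ 2 + (q 3 + t * v3) ^ 2,
         (q 0 + t * v0) * (q 2 + t * v2) + (q 1 + t * v1) * (q 3 + t * v3)] : Fin 3 → ℝ)) 0)
        = ![q 0 ^ 2 + q 1 ^ 2, q 2 ^ 2 + q 3 ^ 2, q 0 * q 2 + q 1 * q 3] := by
      funext i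
      fin_cases i <;> norm_num
    rw [h1]
    exact ((hV.differentiable one_ne_zero) _).hasFDerivAt
  have hVc := hVd.comp_hasDerivAt 0 hσ
  have hraw := (hterm1.add hterm2).add hVc
  -- derivative of the curve in the full phase space
  have hγ : HasDerivAt (fun t : ℝ => ((q + t • v, 0) : (Fin 4 → ℝ) × (Fin 4 → ℝ)))
      ((v, 0) : (Fin 4 → ℝ) × (Fin 4 → ℝ)) 0 := by
    refine HasDerivAt.prodMk ?_ (hasDerivAt_const _ _)
    refine hasDerivAt_pi.mpr fun i => ?_
    simpa [Pi.add_apply, Pi.smul_apply, smul_eq_mul] using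
      ((hasDerivAt_mul_const (v i)).const_add (q i))
  have hHd : HasFDerivAt (Hred ν₁ ν₂ μ₁ μ₂ V)
      (fderiv ℝ (Hred ν₁ ν₂ μ₁ μ₂ V) (q, (0 : Fin 4 → ℝ)))
      ((fun t : ℝ => ((q + t • v, 0) : (Fin 4 → ℝ) × (Fin 4 → ℝ))) 0) := by
    have h1 : ((fun t : ℝ => ((q + t • v, 0) : (Fin 4 → ℝ) × (Fin 4 → ℝ))) 0)
        = (q, (0 : Fin 4 → ℝ)) := by simp
    rw [h1]
    exact (Hred_diff ν₁ ν₂ μ₁ μ₂ hμ hμ₂ V hV q hD).hasFDerivAt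
  have hφ2 := hHd.comp_hasDerivAt 0 hγ
  rw [hcrit] at hφ2
  simp only [ContinuousLinearMap.zero_apply] at hφ2
  -- identify the two functions
  have heq : ((Hred ν₁ ν₂ μ₁ μ₂ V) ∘ (fun t : ℝ => ((q + t • v, 0) : (Fin 4 → ℝ) × (Fin 4 → ℝ))))
      = (fun t : ℝ =>
        (μ₁ ^ 2 * (q 2 + t * v2) ^ 2 + μ₂ ^ 2 * (q 3 + t * v3) ^ 2) /
          (2 * ν₁ * ((q 0 + t * v0) * (q 3 + t * v3) - (q 1 + t * v1) * (q 2 + t * v2)) ^ 2) +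
        (μ₁ ^ 2 * (q 0 + t * v0) ^ 2 + μ₂ ^ 2 * (q 1 + t * v1) ^ 2) /
          (2 * ν₂ * ((q 0 + t * v0) * (q 3 + t * v3) - (q 1 + t * v1) * (q 2 + t * v2)) ^ 2) +
        (V ∘ (fun s : ℝ =>
          (![(q 0 + s * v0) ^ 2 + (q 1 + s * v1) ^ 2,
            (q 2 + s * v2) ^ 2 + (q 3 + s * v3) ^ 2,
            (q 0 + s * v0) * (q 2 + s * v2) + (q 1 + s * v1) * (q 3 + s * v3)] : Fin 3 → ℝ))) t) := by
    funext t
    simp only [Function.comp]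
    rw [Hred_zero ν₁ ν₂ μ₁ μ₂ hμ hμ₂ V]
    have e0 : (q + t • v) 0 = q 0 + t * v0 := by simp [hv]
    have e1 : (q + t • v) 1 = q 1 + t * v1 := by simp [hv]
    have e2 : (q + t • v) 2 = q 2 + t * v2 := by simp [hv]
    have e3 : (q + t • v) 3 = q 3 + t * v3 := by simp [hv]
    rw [e0, e1, e2, e3]
  rw [heq] at hφ2
  have := hraw.unique hφ2
  -- now an algebraic identity
  have h1 : (fderiv ℝ V ![q 0 ^ 2 + q 1 ^ 2, q 2 ^ 2 + q 3 ^ 2, q 0 * q 2 + q 1 * q 3])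
      (![2 * q 0 * v0 + 2 * q 1 * v1, 2 * q 2 * v2 + 2 * q 3 * v3,
         q 0 * v2 + v0 * q 2 + q 1 * v3 + v1 * q 3] : Fin 3 → ℝ)
      = (2 * q 0 * v0 + 2 * q 1 * v1) *
          fderiv ℝ V ![q 0 ^ 2 + q 1 ^ 2, q 2 ^ 2 + q 3 ^ 2, q 0 * q 2 + q 1 * q 3] (Pi.single 0 1)
        + (2 * q 2 * v2 + 2 * q 3 * v3) *
          fderiv ℝ V ![q 0 ^ 2 + q 1 ^ 2, q 2 ^ 2 + q 3 ^ 2, q 0 * q 2 + q 1 * q 3] (Pi.single 1 1)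
        + (q 0 * v2 + v0 * q 2 + q 1 * v3 + v1 * q 3) *
          fderiv ℝ V ![q 0 ^ 2 + q 1 ^ 2, q 2 ^ 2 + q 3 ^ 2, q 0 * q 2 + q 1 * q 3]
            (Pi.single 2 1) := by
    have hw : (![2 * q 0 * v0 + 2 * q 1 * v1, 2 * q 2 * v2 + 2 * q 3 * v3,
         q 0 * v2 + v0 * q 2 + q 1 * v3 + v1 * q 3] : Fin 3 → ℝ)
        = (2 * q 0 * v0 + 2 * q 1 * v1) • (Pi.single 0 1 : Fin 3 → ℝ)
          + (2 * q 2 * v2 + 2 * q 3 * v3) • (Pi.single 1 1 : Fin 3 → ℝ)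
          + (q 0 * v2 + v0 * q 2 + q 1 * v3 + v1 * q 3) • (Pi.single 2 1 : Fin 3 → ℝ) := by
      funext i
      fin_cases i <;> simp [Pi.single_apply]
    rw [hw, map_add, map_add, map_smul, map_smul, map_smul, smul_eq_mul, smul_eq_mul, smul_eq_mul]
  have hν₁' : ν₁ ≠ 0 := hν₁.ne'
  have hν₂' : ν₂ ≠ 0 := hν₂.ne'
  set F := fderiv ℝ V ![q 0 ^ 2 + q 1 ^ 2, q 2 ^ 2 + q 3 ^ 2, q 0 * q 2 + q 1 * q 3] with hF
  set W1 := F (Pi.single 0 1) with hW1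
  set W2 := F (Pi.single 1 1) with hW2
  set W3 := F (Pi.single 2 1) with hW3
  set W := F ![2 * q 0 * v0 + 2 * q 1 * v1, 2 * q 2 * v2 + 2 * q 3 * v3,
    q 0 * v2 + v0 * q 2 + q 1 * v3 + v1 * q 3] with hW
  rw [h1] at this
  rw [hD0] at this
  have hD' : q 3 * q 0 - q 2 * q 1 ≠ 0 := by rwa [mul_comm (q 3), mul_comm (q 2)]
  field_simp at this
  have hX : (8 * ν₁ * ν₂ * (q 0 * q 3 - q 1 * q 2) ^ 5) ≠ 0 :=
    mul_ne_zero (mul_ne_zero (mul_ne_zero (by norm_num) hν₁.ne') hν₂.ne') (pow_ne_zero _ hD)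
  apply mul_right_cancel₀ hX
  rw [zero_mul]
  linear_combination (16 * ν₁ * ν₂ * (q 0 * q 3 - q 1 * q 2) ^ 5) * this

/-- For a general potential, a zero-momentum critical point of the fully reduced
Hamiltonian satisfies the solvability condition `ν₁q₁q₂ + ν₂q₃q₄ = 0` and the four
equilibrium conditions of Lemma 7. -/
theorem general_equilibrium_conditions (ν₁ ν₂ μ₁ μ₂ : ℝ) (hν₁ : 0 < ν₁)
    (hν₂ : 0 < ν₂) (hμ : μ₁ > μ₂) (hμ₂ : 0 ≤ μ₂) (hμμ : μ₁ ^ 2 ≠ μ₂ ^ 2)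
    (V : (Fin 3 → ℝ) → ℝ) (hV : ContDiff ℝ 1 V) (q : Fin 4 → ℝ)
    (hA : (q 0 * q 3 - q 1 * q 2) / 2 ≠ 0)
    (hcrit : fderiv ℝ (Hred ν₁ ν₂ μ₁ μ₂ V) (q, (0 : Fin 4 → ℝ)) = 0) :
    (let A := (q 0 * q 3 - q 1 * q 2) / 2
     let s : Fin 3 → ℝ := ![q 0 ^ 2 + q 1 ^ 2, q 2 ^ 2 + q 3 ^ 2, q 0 * q 2 + q 1 * q 3]
     let V₁ := fderiv ℝ V s (Pi.single 0 1)
     let V₂ := fderiv ℝ V s (Pi.single 1 1)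
     let V₃ := fderiv ℝ V s (Pi.single 2 1)
     let I₁ := ν₂ * q 3 ^ 2 + ν₁ * q 1 ^ 2
     let I₂ := ν₁ * q 0 ^ 2 + ν₂ * q 2 ^ 2
     ν₁ * q 0 * q 1 + ν₂ * q 2 * q 3 = 0 ∧
     I₁ * μ₂ ^ 2 * q 3 / (8 * A ^ 3 * ν₁ * ν₂) = 2 * q 0 * V₁ + q 2 * V₃ ∧
     -(I₂ * μ₁ ^ 2 * q 2) / (8 * A ^ 3 * ν₁ * ν₂) = 2 * q 1 * V₁ + q 3 * V₃ ∧
     -(I₁ * μ₂ ^ 2 * q 1) / (8 * A ^ 3 * ν₁ * ν₂) = 2 * q 2 * V₂ + q 0 * V₃ ∧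
     I₂ * μ₁ ^ 2 * q 0 / (8 * A ^ 3 * ν₁ * ν₂) = 2 * q 3 * V₂ + q 1 * V₃) := by
  have hD : q 0 * q 3 - q 1 * q 2 ≠ 0 := by
    intro h
    exact hA (by rw [h]; norm_num)
  have hE0 := key ν₁ ν₂ μ₁ μ₂ hν₁ hν₂ hμ hμ₂ V hV q hD hcrit 1 0 0 0
  have hE1 := key ν₁ ν₂ μ₁ μ₂ hν₁ hν₂ hμ hμ₂ V hV q hD hcrit 0 1 0 0
  have hE2 := key ν₁ ν₂ μ₁ μ₂ hν₁ hν₂ hμ hμ₂ V hV q hD hcrit 0 0 1 0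
  have hE3 := key ν₁ ν₂ μ₁ μ₂ hν₁ hν₂ hμ hμ₂ V hV q hD hcrit 0 0 0 1
  have hcomb : 2 * (q 0 * q 3 - q 1 * q 2) *
      ((μ₁ ^ 2 - μ₂ ^ 2) * (ν₁ * q 0 * q 1 + ν₂ * q 2 * q 3)) = 0 := by
    linear_combination q 1 * hE0 - q 0 * hE1 + q 3 * hE2 - q 2 * hE3
  have hS : ν₁ * q 0 * q 1 + ν₂ * q 2 * q 3 = 0 := by
    rcases mul_eq_zero.mp hcomb with h | h
    · exact absurd h (mul_ne_zero two_ne_zero hD)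
    · rcases mul_eq_zero.mp h with h' | h'
      · exact absurd h' (sub_ne_zero.mpr hμμ)
      · exact h'
  have h8 : 8 * ((q 0 * q 3 - q 1 * q 2) / 2) ^ 3 * ν₁ * ν₂ ≠ 0 :=
    mul_ne_zero (mul_ne_zero (mul_ne_zero (by norm_num) (pow_ne_zero _ hA)) hν₁.ne') hν₂.ne'
  refine ⟨hS, ?_, ?_, ?_, ?_⟩
  · rw [div_eq_iff h8]
    linear_combination (-1 / 2 : ℝ) * hE0 - μ₁ ^ 2 * q 2 * hS
  · rw [div_eq_iff h8]
    linear_combination (-1 / 2 : ℝ) * hE1 + μ₂ ^ 2 * q 3 * hS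
  · rw [div_eq_iff h8]
    linear_combination (-1 / 2 : ℝ) * hE2 + μ₁ ^ 2 * q 0 * hS
  · rw [div_eq_iff h8]
    linear_combination (-1 / 2 : ℝ) * hE3 - μ₂ ^ 2 * q 1 * hS

end
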